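/- Fix d ≥ 1, finite outcome sets A and C, and set B = (ℤ/d) × (ℤ/d). Let ν range over N = (ℤ/d) × (ℤ/d), let p_N be a probability distribution on N, and let f : B × N → A and g : B × N → C be functions. Then the distribution p(a,b,c) = (1/d²) Σ_{ν∈N} [a = f(b,ν)]·[c = g(b,ν)]·p_N(ν) (where [·] is the indicator) is Evans-classical; a witnessing model is obtained by taking Λ = M = ℤ/d uniform, p(b | λ, μ) = p_N((λ + b₁, μ + b₂)) for b = (b₁,b₂), and response functions f'(b,λ) = f(b, (λ − b₁, ·)) and g'(b,μ) = g(b, (·, μ − b₂)) shifted modulo d. -/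

import Mathlib

open Finset

/-- `p : A → B → C → ℝ` is Evans-classical: it factorizes according to the
Evans causal structure with finite classical latent variables `Λ = Fin nΛ`, `M = Fin nM`. -/
def IsEvansClassical {A B C : Type*} [Fintype A] [Fintype B] [Fintype C]
    (p : A → B → C → ℝ) : Prop :=
  ∃ (nΛ nM : ℕ) (qΛ : Fin nΛ → ℝ) (qM : Fin nM → ℝ)
    (kA : B → Fin nΛ → A → ℝ) (kB : Fin nΛ → Fin nM → B → ℝ)
    (kC : B → Fin nM → C → ℝ),
    (∀ l, 0 ≤ qΛ l) ∧ (∑ l, qΛ l = 1) ∧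
    (∀ m, 0 ≤ qM m) ∧ (∑ m, qM m = 1) ∧
    (∀ b l a, 0 ≤ kA b l a) ∧ (∀ b l, ∑ a, kA b l a = 1) ∧
    (∀ l m b, 0 ≤ kB l m b) ∧ (∀ l m, ∑ b, kB l m b = 1) ∧
    (∀ b m c, 0 ≤ kC b m c) ∧ (∀ b m, ∑ c, kC b m c = 1) ∧
    (∀ a b c, p a b c = ∑ l, ∑ m, qΛ l * qM m * kA b l a * kB l m b * kC b m c)

/-- Fix `d ≥ 1` (via `NeZero d`), outcome sets `A`, `C`, and
`B = N = (ℤ/d) × (ℤ/d)`. For any distribution `p_N` on `N` and response functions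
`f : B → N → A`, `g : B → N → C`, the distribution
`p(a,b,c) = (1/d²) Σ_ν [a = f(b,ν)]·[c = g(b,ν)]·p_N(ν)` is Evans-classical. -/
theorem shared_nu_strategy_is_evansClassical
    {A C : Type*} [Fintype A] [Fintype C] [Nonempty A] [Nonempty C]
    [DecidableEq A] [DecidableEq C]
    (d : ℕ) [NeZero d]
    (pN : ZMod d × ZMod d → ℝ)
    (hpN0 : ∀ ν, 0 ≤ pN ν) (hpN1 : ∑ ν, pN ν = 1)
    (f : ZMod d × ZMod d → ZMod d × ZMod d → A)
    (g : ZMod d × ZMod d → ZMod d × ZMod d → C) :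
    IsEvansClassical (fun (a : A) (b : ZMod d × ZMod d) (c : C) =>
      (1 / (d : ℝ) ^ 2) *
        ∑ ν : ZMod d × ZMod d,
          (if a = f b ν then (1 : ℝ) else 0) * (if c = g b ν then (1 : ℝ) else 0) * pN ν) := by
  classical
  set n : ℕ := Fintype.card (ZMod d × ZMod d) with hn
  let e : Fin n ≃ (ZMod d × ZMod d) := (Fintype.equivFin (ZMod d × ZMod d)).symm
  have hcard : (n : ℝ) = (d : ℝ) ^ 2 := by
    rw [hn]
    push_cast [Fintype.card_prod, ZMod.card]
    ring
  have hd : ((d : ℝ) ^ 2) ≠ 0 := by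
    have : (d : ℝ) ≠ 0 := Nat.cast_ne_zero.mpr (NeZero.ne d)
    positivity
  refine ⟨n, n, fun l => pN (e l), fun _ => 1 / (d : ℝ) ^ 2,
    fun b l a => if a = f b (e l) then 1 else 0,
    fun l m b => if b = e l - e m then 1 else 0,
    fun b m c => if c = g b (b + e m) then 1 else 0,
    fun l => hpN0 _, ?_, fun m => by positivity, ?_,
    fun b l a => by positivity, fun b l => by simp, fun l m b => by positivity,
    fun l m => by simp, fun b m c => by positivity, fun b m => by simp, ?_⟩
  · exact (Fintype.sum_equiv e _ pN fun l => rfl).trans hpN1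
  · rw [Finset.sum_const, Finset.card_univ, Fintype.card_fin, nsmul_eq_mul, hcard]
    field_simp
    exact div_self (Nat.cast_ne_zero.mpr (NeZero.ne d))
  · intro a b c
    have key : ∀ l : Fin n,
        ∑ m : Fin n, (pN (e l) * (1 / (d : ℝ) ^ 2) * (if a = f b (e l) then (1:ℝ) else 0)
            * (if b = e l - e m then 1 else 0) * (if c = g b (b + e m) then 1 else 0))
        = (1 / (d : ℝ) ^ 2) *
            ((if a = f b (e l) then (1:ℝ) else 0) * (if c = g b (e l) then 1 else 0) * pN (e l)) := by
      intro l
      rw [Finset.sum_eq_single (e.symm (e l - b))]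
      · have h1 : e (e.symm (e l - b)) = e l - b := e.apply_symm_apply _
        rw [h1]
        have h2 : b = e l - (e l - b) := by ring
        rw [if_pos h2]
        have h3 : b + (e l - b) = e l := by ring
        rw [h3]
        ring
      · intro m _ hm
        have : b ≠ e l - e m := by
          intro h
          apply hm
          have : e m = e l - b := by rw [h]; ring
          rw [← this, Equiv.symm_apply_apply]
        rw [if_neg this]
        ring
      · intro h
        exact absurd (Finset.mem_univ _) h
    calc (1 / (d : ℝ) ^ 2) * ∑ ν : ZMod d × ZMod d,
          (if a = f b ν then (1:ℝ) else 0) * (if c = g b ν then 1 else 0) * pN ν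
        = ∑ l : Fin n, (1 / (d : ℝ) ^ 2) *
            ((if a = f b (e l) then (1:ℝ) else 0) * (if c = g b (e l) then 1 else 0) * pN (e l)) := by
          rw [← Finset.mul_sum]
          congr 1
          exact (Fintype.sum_equiv e _ _ fun l => rfl).symm
      _ = _ := by
          refine Finset.sum_congr rfl fun l _ => ?_
          exact (key l).symm
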